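/- For every integer k ≥ 0 and every Young diagram λ with exactly d cells, h_{2k}(λ) ≤ h_{2k}(0, 1, 2, …, d−1); that is, among Young diagrams with d cells, the evaluation of the complete homogeneous symmetric polynomial of degree 2k at the multiset of contents is maximized by the single-row diagram, whose contents are 0, 1, …, d−1. -/

import Mathlib

noncomputable section

/-- The content of the cell in row `i` and column `j` (0-indexed) is `j - i`. -/
def content (c : ℕ × ℕ) : ℤ := (c.2 : ℤ) - (c.1 : ℤ)

open scoped Classical in
/-- The complete homogeneous symmetric polynomial `h_r(x₁, …, x_d)` as a function of
`x : Fin d → ℝ`: the sum of `x_{i₁} ⋯ x_{i_r}` over all `1 ≤ i₁ ≤ … ≤ i_r ≤ d`,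
i.e. over all monotone maps `Fin r → Fin d`. -/
def hsym (d r : ℕ) (x : Fin d → ℝ) : ℝ :=
  ∑ f ∈ Finset.univ.filter (fun f : Fin r → Fin d => Monotone f), ∏ i, x (f i)

/-- `h_r(λ)`: the evaluation of the complete homogeneous symmetric polynomial of degree `r`
at the multiset of contents of the Young diagram `λ` (independent of the enumeration of
the cells, `h_r` being symmetric). -/
def hYoung (r : ℕ) (lam : YoungDiagram) : ℝ :=
  hsym lam.cells.card r (fun i => (content (lam.cells.equivFin.symm i) : ℝ))

/-- If `f` is monotone, any monotone rearrangement of a permutation of `f` is `f` itself. -/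
lemma sorted_comp_perm {n : ℕ} {α : Type*} [LinearOrder α] {f : Fin n → α}
    (hf : Monotone f) (σ : Equiv.Perm (Fin n)) :
    (f ∘ σ) ∘ Tuple.sort (f ∘ σ) = f := by
  rw [Tuple.comp_perm_comp_sort_eq_comp_sort, Tuple.sort_eq_refl_iff_monotone.mpr hf]
  rfl

/-- `hsym` is a symmetric function. -/
lemma hsym_comp_equiv (d r : ℕ) (x : Fin d → ℝ) (e : Equiv.Perm (Fin d)) :
    hsym d r (x ∘ e) = hsym d r x := by
  classical
  unfold hsym
  refine Finset.sum_nbij'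
    (fun f => (⇑e ∘ f) ∘ Tuple.sort (⇑e ∘ f))
    (fun g => (⇑e.symm ∘ g) ∘ Tuple.sort (⇑e.symm ∘ g)) ?_ ?_ ?_ ?_ ?_
  · intro f _
    simp only [Finset.mem_filter, Finset.mem_univ, true_and]
    exact Tuple.monotone_sort _
  · intro g _
    simp only [Finset.mem_filter, Finset.mem_univ, true_and]
    exact Tuple.monotone_sort _
  · intro f hf
    simp only [Finset.mem_filter, Finset.mem_univ, true_and] at hf
    have h1 : ⇑e.symm ∘ ((⇑e ∘ f) ∘ Tuple.sort (⇑e ∘ f))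
        = (f ∘ Tuple.sort (⇑e ∘ f)) := by
      ext k; simp [Function.comp]
    simp only [h1]
    exact sorted_comp_perm hf _
  · intro g hg
    simp only [Finset.mem_filter, Finset.mem_univ, true_and] at hg
    have h1 : ⇑e ∘ ((⇑e.symm ∘ g) ∘ Tuple.sort (⇑e.symm ∘ g))
        = (g ∘ Tuple.sort (⇑e.symm ∘ g)) := by
      ext k; simp [Function.comp]
    simp only [h1]
    exact sorted_comp_perm hg _
  · intro f _
    exact (Equiv.prod_comp (Tuple.sort (⇑e ∘ f)) (fun k => x (e (f k)))).symm

/-- Key comparison lemma: if there is a permutation `e` with `|x i| ≤ y (e i)` for all `i`,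
then `hsym d r x ≤ hsym d r y`. -/
lemma hsym_le (d r : ℕ) (x y : Fin d → ℝ) (e : Equiv.Perm (Fin d))
    (h : ∀ i, |x i| ≤ y (e i)) : hsym d r x ≤ hsym d r y := by
  have h1 : hsym d r x ≤ hsym d r (y ∘ e) := by
    unfold hsym
    refine Finset.sum_le_sum fun f _ => ?_
    calc ∏ i, x (f i) ≤ |∏ i, x (f i)| := le_abs_self _
      _ = ∏ i, |x (f i)| := Finset.abs_prod _ _
      _ ≤ ∏ i, (y ∘ e) (f i) :=
        Finset.prod_le_prod (fun i _ => abs_nonneg _) (fun i _ => h (f i))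
  calc hsym d r x ≤ hsym d r (y ∘ e) := h1
    _ = hsym d r y := hsym_comp_equiv d r y e

/-- Counting lemma: any Young diagram with `d` cells has at least `min d (t+1)` cells of
absolute content at most `t`. -/
lemma count_content_le (lam : YoungDiagram) (t : ℕ) :
    min lam.card (t + 1) ≤ (lam.cells.filter fun c => (content c).natAbs ≤ t).card := by
  classical
  by_cases H : ∀ c ∈ lam.cells, max c.1 c.2 ≤ t
  · have : (lam.cells.filter fun c => (content c).natAbs ≤ t) = lam.cells := by
      refine Finset.filter_true_of_mem fun c hc => ?_
      have := H c hc
      simp only [content]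
      omega
    rw [this]
    exact min_le_left _ _
  · push_neg at H
    obtain ⟨c, hc, hmax⟩ := H
    have hinj : (Finset.range (t + 1)).card ≤
        (lam.cells.filter fun c' => (content c').natAbs ≤ t).card := by
      refine Finset.card_le_card_of_injOn (fun k => (min c.1 k, min c.2 k)) ?_ ?_
      · intro k hk
        rw [Finset.mem_coe, Finset.mem_range] at hk
        rw [Finset.mem_coe, Finset.mem_filter]
        constructor
        · rw [YoungDiagram.mem_cells] at hc ⊢
          exact lam.up_left_mem (min_le_left _ _) (min_le_left _ _) hc
        · simp only [content]
          omega
      · intro k hk k' hk' heq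
        rw [Finset.mem_coe, Finset.mem_range] at hk hk'
        rw [Prod.mk.injEq] at heq
        omega
    rw [Finset.card_range] at hinj
    exact le_trans (min_le_right _ _) hinj

theorem hYoung_le_single_row (k d : ℕ) (lam : YoungDiagram) (hlam : lam.card = d) :
    hYoung (2 * k) lam ≤ hsym d (2 * k) (fun i : Fin d => (i : ℝ)) := by
  classical
  subst hlam
  show hsym lam.cells.card (2 * k) (fun i => (content (lam.cells.equivFin.symm i) : ℝ))
      ≤ hsym lam.cells.card (2 * k) (fun i : Fin lam.cells.card => (i : ℝ))
  set n := lam.cells.card with hn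
  set g : Fin n → ℕ := fun i => (content ((lam.cells.equivFin.symm i) : ℕ × ℕ)).natAbs
    with hg
  set σ : Equiv.Perm (Fin n) := Tuple.sort g with hσ
  -- transport the counting lemma to `Fin n`
  have hcount : ∀ t : ℕ, min n (t + 1) ≤ (Finset.univ.filter fun m : Fin n => g m ≤ t).card := by
    intro t
    have hcard : (Finset.univ.filter fun m : Fin n => g m ≤ t).card
        = (lam.cells.filter fun c => (content c).natAbs ≤ t).card := by
      refine Finset.card_bij' (fun m _ => ((lam.cells.equivFin.symm m : ℕ × ℕ)))
        (fun c hc => lam.cells.equivFin ⟨c, (Finset.mem_filter.mp hc).1⟩) ?_ ?_ ?_ ?_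
      · intro m hm
        rw [Finset.mem_filter] at hm ⊢
        exact ⟨(lam.cells.equivFin.symm m).2, hm.2⟩
      · intro c hc
        rw [Finset.mem_filter]
        refine ⟨Finset.mem_univ _, ?_⟩
        have : lam.cells.equivFin.symm (lam.cells.equivFin ⟨c, (Finset.mem_filter.mp hc).1⟩)
            = ⟨c, (Finset.mem_filter.mp hc).1⟩ := Equiv.symm_apply_apply _ _
        simp only [hg, this]
        exact (Finset.mem_filter.mp hc).2
      · intro m hm
        simp
      · intro c hc
        simp
    rw [hcard]
    exact count_content_le lam t
  -- sorted values are dominated by `0, 1, …, n-1`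
  have key : ∀ i : Fin n, g (σ i) ≤ (i : ℕ) := by
    intro i
    by_contra hlt
    push_neg at hlt
    have hsub : (Finset.univ.filter fun m : Fin n => g m ≤ (i : ℕ))
        ⊆ Finset.image σ (Finset.Iio i) := by
      intro m hm
      rw [Finset.mem_filter] at hm
      rw [Finset.mem_image]
      refine ⟨σ.symm m, ?_, Equiv.apply_symm_apply _ _⟩
      rw [Finset.mem_Iio]
      by_contra hge
      push_neg at hge
      have hmono : g (σ i) ≤ g (σ (σ.symm m)) := Tuple.monotone_sort g hge
      rw [Equiv.apply_symm_apply] at hmono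
      omega
    have h1 : (Finset.univ.filter fun m : Fin n => g m ≤ (i : ℕ)).card ≤ (i : ℕ) := by
      calc (Finset.univ.filter fun m : Fin n => g m ≤ (i : ℕ)).card
          ≤ (Finset.image σ (Finset.Iio i)).card := Finset.card_le_card hsub
        _ ≤ (Finset.Iio i).card := Finset.card_image_le
        _ = (i : ℕ) := Fin.card_Iio i
    have h2 := hcount (i : ℕ)
    have h3 : (i : ℕ) < n := i.isLt
    omega
  -- conclude
  refine hsym_le n (2 * k) _ _ σ.symm fun i => ?_
  have hkey := key (σ.symm i)
  rw [Equiv.apply_symm_apply] at hkey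
  have habs : |((content ((lam.cells.equivFin.symm i) : ℕ × ℕ)) : ℝ)| = (g i : ℝ) := by
    rw [hg]
    push_cast [Nat.cast_natAbs]
    rfl
  rw [habs]
  exact_mod_cast hkey
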